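/- (Example 3: a family of 7-dimensional real Bott manifolds without Spin structure.) Let A be any 7×7 Bott matrix (strictly upper triangular with entries in {0,1}) whose first row is (0,0,1,1,1,1,0) and whose second row is (0,0,0,0,0,1,1). Then there exists no group homomorphism ε from Γ(A) to the group of units of Cl_7 satisfying ε(s_1) ∈ {ι(e_3)ι(e_4)ι(e_5)ι(e_6), −ι(e_3)ι(e_4)ι(e_5)ι(e_6)} and ε(s_2) ∈ {ι(e_6)ι(e_7), −ι(e_6)ι(e_7)}. -/

import Mathlib

noncomputable section

open Matrix

/-- The Euclidean group `E(n)`: pairs `(M, b)` with `M ∈ O(n)`, `b ∈ ℝⁿ`,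
acting on `ℝⁿ` by `x ↦ M x + b`. -/
@[ext]
structure EuclideanGroup (n : ℕ) where
  M : Matrix.orthogonalGroup (Fin n) ℝ
  b : Fin n → ℝ

namespace EuclideanGroup

variable {n : ℕ}

instance : Mul (EuclideanGroup n) :=
  ⟨fun g h => ⟨g.M * h.M, (g.M : Matrix (Fin n) (Fin n) ℝ) *ᵥ h.b + g.b⟩⟩

instance : One (EuclideanGroup n) := ⟨⟨1, 0⟩⟩

instance : Inv (EuclideanGroup n) :=
  ⟨fun g => ⟨g.M⁻¹, -(star (g.M : Matrix (Fin n) (Fin n) ℝ) *ᵥ g.b)⟩⟩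

@[simp] theorem mul_M (g h : EuclideanGroup n) : (g * h).M = g.M * h.M := rfl
@[simp] theorem mul_b (g h : EuclideanGroup n) :
    (g * h).b = (g.M : Matrix (Fin n) (Fin n) ℝ) *ᵥ h.b + g.b := rfl
@[simp] theorem one_M : (1 : EuclideanGroup n).M = 1 := rfl
@[simp] theorem one_b : (1 : EuclideanGroup n).b = 0 := rfl
@[simp] theorem inv_M (g : EuclideanGroup n) : g⁻¹.M = g.M⁻¹ := rfl
@[simp] theorem inv_b (g : EuclideanGroup n) :
    g⁻¹.b = -(star (g.M : Matrix (Fin n) (Fin n) ℝ) *ᵥ g.b) := rfl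

instance : Group (EuclideanGroup n) where
  mul_assoc a b c :=
    EuclideanGroup.ext (mul_assoc _ _ _)
      (by simp [Matrix.mulVec_add, Matrix.mulVec_mulVec, add_assoc])
  one_mul a := by ext <;> simp
  mul_one a := by ext <;> simp
  inv_mul_cancel a :=
    EuclideanGroup.ext (inv_mul_cancel _) (by exact add_neg_cancel _)

end EuclideanGroup


/-- A Bott matrix: a strictly upper triangular binary matrix
(entries `0` or `1`, and `A i j = 0` whenever `j ≤ i`). -/
def IsBottMatrix {n : ℕ} (A : Matrix (Fin n) (Fin n) ℕ) : Prop :=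
  (∀ i j : Fin n, A i j = 0 ∨ A i j = 1) ∧ ∀ i j : Fin n, (j : ℕ) ≤ (i : ℕ) → A i j = 0

/-- The diagonal matrix `D_i` with `(k,k)`-entry `(-1) ^ (A i k)`. -/
def Dmat {n : ℕ} (A : Matrix (Fin n) (Fin n) ℕ) (i : Fin n) : Matrix (Fin n) (Fin n) ℝ :=
  Matrix.diagonal fun k => (-1 : ℝ) ^ (A i k)

theorem diagonal_pm_mem_orthogonalGroup {n : ℕ} (d : Fin n → ℝ)
    (hd : ∀ k, d k = 1 ∨ d k = -1) :
    Matrix.diagonal d ∈ Matrix.orthogonalGroup (Fin n) ℝ := by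
  rw [Matrix.mem_orthogonalGroup_iff]
  have : star (Matrix.diagonal d) = Matrix.diagonal d := by
    simp [Matrix.star_eq_conjTranspose, Matrix.diagonal_conjTranspose]
  rw [show (Matrix.diagonal d)ᵀ = Matrix.diagonal d by simp, Matrix.diagonal_mul_diagonal]
  have h1 : (fun k => d k * d k) = fun _ => (1 : ℝ) :=
    funext fun k => by rcases hd k with h | h <;> simp [h]
  rw [h1, Matrix.diagonal_one]

theorem Dmat_mem {n : ℕ} (A : Matrix (Fin n) (Fin n) ℕ) (i : Fin n) :
    Dmat A i ∈ Matrix.orthogonalGroup (Fin n) ℝ := by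
  refine diagonal_pm_mem_orthogonalGroup _ fun k => ?_
  rcases Nat.even_or_odd (A i k) with h | h
  · exact Or.inl (h.neg_one_pow)
  · exact Or.inr (h.neg_one_pow)

/-- `D_i` as an element of the orthogonal group. -/
def Dorth {n : ℕ} (A : Matrix (Fin n) (Fin n) ℕ) (i : Fin n) :
    Matrix.orthogonalGroup (Fin n) ℝ :=
  ⟨Dmat A i, Dmat_mem A i⟩

/-- The generators `s_i` of the Bieberbach group of the real Bott manifold `M(A)`:
for `i` with `i + 1 < n` (i.e. the mathematical indices `1 ≤ i ≤ n - 1`),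
`s_i = (D_i, (1/2) e_i)`, and the last generator (mathematical index `n`) is
`s_n = (I, e_n)`.  (Indices are `0`-based.) -/
def sgen {n : ℕ} (A : Matrix (Fin n) (Fin n) ℕ) (i : Fin n) : EuclideanGroup n :=
  if (i : ℕ) + 1 = n then ⟨1, Pi.single i 1⟩
  else ⟨Dorth A i, Pi.single i (1 / 2 : ℝ)⟩

/-- The fundamental group `Γ(A)` of the real Bott manifold `M(A)`, as the subgroup
of `E(n)` generated by `s_1, …, s_n`. -/
def BottGroup {n : ℕ} (A : Matrix (Fin n) (Fin n) ℕ) : Subgroup (EuclideanGroup n) :=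
  Subgroup.closure (Set.range (sgen A))

theorem sgen_mem {n : ℕ} (A : Matrix (Fin n) (Fin n) ℕ) (i : Fin n) :
    sgen A i ∈ BottGroup A :=
  Subgroup.subset_closure (Set.mem_range_self i)

/-- The homomorphism sending an affine isometry `(M, b)` to its linear part `M`. -/
def linearPart (n : ℕ) : EuclideanGroup n →* Matrix.orthogonalGroup (Fin n) ℝ where
  toFun g := g.M
  map_one' := rfl
  map_mul' _ _ := rfl

/-- The standard positive definite quadratic form `Q(x) = x₁² + ⋯ + xₙ²` on `ℝⁿ`. -/
def Qstd (n : ℕ) : QuadraticForm ℝ (Fin n → ℝ) :=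
  QuadraticMap.weightedSumSquares ℝ (fun _ : Fin n => (1 : ℝ))

/-- The Clifford algebra `Cl_n` of `Q(x) = x₁² + ⋯ + xₙ²`. -/
abbrev Cl (n : ℕ) := CliffordAlgebra (Qstd n)

/-- For a finite set `S = {s₁ < s₂ < ⋯ < s_k} ⊆ {1, …, n}`, the product
`e_S = ι(e_{s₁}) ι(e_{s₂}) ⋯ ι(e_{s_k})` in `Cl_n` (with `e_∅ = 1`). -/
def eProd {n : ℕ} (S : Finset (Fin n)) : Cl n :=
  ((S.sort (· ≤ ·)).map fun j => CliffordAlgebra.ι (Qstd n) (Pi.single j 1)).prod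



open CliffordAlgebra in
theorem Qstd_single_aux (i : Fin 7) : Qstd 7 (Pi.single i 1) = 1 := by
  simp [Qstd, QuadraticMap.weightedSumSquares_apply, Pi.single_apply]

open CliffordAlgebra in
theorem anti_aux {i j : Fin 7} (h : i ≠ j) :
    ι (Qstd 7) (Pi.single i 1) * ι (Qstd 7) (Pi.single j 1)
      = -(ι (Qstd 7) (Pi.single j 1) * ι (Qstd 7) (Pi.single i 1)) := by
  have hp : QuadraticMap.polar (⇑(Qstd 7)) (Pi.single i 1) (Pi.single j 1) = 0 := by
    simp only [QuadraticMap.polar, Qstd, QuadraticMap.weightedSumSquares_apply,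
      Pi.add_apply, Pi.single_apply, smul_eq_mul, one_mul]
    rw [Finset.sum_congr rfl (g := fun k : Fin 7 =>
      ((if k = i then (1:ℝ) else 0) * (if k = i then (1:ℝ) else 0)
        + (if k = j then (1:ℝ) else 0) * (if k = j then (1:ℝ) else 0)))
      (fun k _ => by rcases eq_or_ne k i with rfl | hki <;>
        rcases eq_or_ne k j with rfl | hkj <;> simp_all)]
    rw [Finset.sum_add_distrib]
    simp
  have := CliffordAlgebra.ι_mul_ι_add_swap (Q := Qstd 7) (Pi.single i 1) (Pi.single j 1)
  rw [hp, map_zero] at this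
  exact eq_neg_of_add_eq_zero_left this

/-- Example 3.  For any `7 × 7` Bott matrix `A` whose first row is
`(0,0,1,1,1,1,0)` and whose second row is `(0,0,0,0,0,1,1)`, the oriented real Bott
manifold `M(A)` has no Spin structure: no group homomorphism `ε : Γ(A) → Cl₇ˣ` satisfies
`ε(s₁) = ± ι(e₃) ι(e₄) ι(e₅) ι(e₆)` and `ε(s₂) = ± ι(e₆) ι(e₇)` (indices `0`-based
below). -/
theorem dim7_family_no_spin (A : Matrix (Fin 7) (Fin 7) ℕ) (hA : IsBottMatrix A)
    (hrow1 : A 0 = ![0,0,1,1,1,1,0]) (hrow2 : A 1 = ![0,0,0,0,0,1,1]) :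
    ¬∃ ε : BottGroup A →* (Cl 7)ˣ,
      (((ε ⟨sgen A 0, sgen_mem A 0⟩ : (Cl 7)ˣ) : Cl 7) =
          CliffordAlgebra.ι (Qstd 7) (Pi.single 2 1) *
            CliffordAlgebra.ι (Qstd 7) (Pi.single 3 1) *
            CliffordAlgebra.ι (Qstd 7) (Pi.single 4 1) *
            CliffordAlgebra.ι (Qstd 7) (Pi.single 5 1) ∨
        ((ε ⟨sgen A 0, sgen_mem A 0⟩ : (Cl 7)ˣ) : Cl 7) =
          -(CliffordAlgebra.ι (Qstd 7) (Pi.single 2 1) *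
            CliffordAlgebra.ι (Qstd 7) (Pi.single 3 1) *
            CliffordAlgebra.ι (Qstd 7) (Pi.single 4 1) *
            CliffordAlgebra.ι (Qstd 7) (Pi.single 5 1))) ∧
      (((ε ⟨sgen A 1, sgen_mem A 1⟩ : (Cl 7)ˣ) : Cl 7) =
          CliffordAlgebra.ι (Qstd 7) (Pi.single 5 1) *
            CliffordAlgebra.ι (Qstd 7) (Pi.single 6 1) ∨
        ((ε ⟨sgen A 1, sgen_mem A 1⟩ : (Cl 7)ˣ) : Cl 7) =
          -(CliffordAlgebra.ι (Qstd 7) (Pi.single 5 1) *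
            CliffordAlgebra.ι (Qstd 7) (Pi.single 6 1))) := by
  rintro ⟨ε, h1, h2⟩
  -- abbreviations
  set e : Fin 7 → Cl 7 := fun i => CliffordAlgebra.ι (Qstd 7) (Pi.single i 1) with he
  -- unfold the two generators
  have hs0 : sgen A 0 = ⟨Dorth A 0, Pi.single 0 (1 / 2 : ℝ)⟩ := by
    simp [sgen]
  have hs1 : sgen A 1 = ⟨Dorth A 1, Pi.single 1 (1 / 2 : ℝ)⟩ := by
    simp [sgen]
  have h01 : A 0 1 = 0 := by rw [hrow1]; rfl
  have h10 : A 1 0 = 0 := by rw [hrow2]; rfl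
  -- the two generators commute in the Euclidean group
  have hcommE : sgen A 0 * sgen A 1 = sgen A 1 * sgen A 0 := by
    rw [hs0, hs1]
    apply EuclideanGroup.ext
    · apply Subtype.ext
      show (Dmat A 0 : Matrix (Fin 7) (Fin 7) ℝ) * Dmat A 1 = Dmat A 1 * Dmat A 0
      simp [Dmat, Matrix.diagonal_mul_diagonal, mul_comm]
    · show (Dmat A 0 : Matrix (Fin 7) (Fin 7) ℝ) *ᵥ Pi.single 1 (1/2 : ℝ) + Pi.single 0 (1/2:ℝ)
        = (Dmat A 1 : Matrix (Fin 7) (Fin 7) ℝ) *ᵥ Pi.single 0 (1/2 : ℝ) + Pi.single 1 (1/2:ℝ)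
      rw [Dmat, Dmat, Matrix.diagonal_mulVec_single, Matrix.diagonal_mulVec_single,
        h01, h10]
      simp [add_comm]
  have hcommG : (⟨sgen A 0, sgen_mem A 0⟩ * ⟨sgen A 1, sgen_mem A 1⟩ : BottGroup A)
      = ⟨sgen A 1, sgen_mem A 1⟩ * ⟨sgen A 0, sgen_mem A 0⟩ := Subtype.ext hcommE
  have hcc : ((ε ⟨sgen A 0, sgen_mem A 0⟩ : (Cl 7)ˣ) : Cl 7)
        * ((ε ⟨sgen A 1, sgen_mem A 1⟩ : (Cl 7)ˣ) : Cl 7)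
      = ((ε ⟨sgen A 1, sgen_mem A 1⟩ : (Cl 7)ˣ) : Cl 7)
        * ((ε ⟨sgen A 0, sgen_mem A 0⟩ : (Cl 7)ˣ) : Cl 7) := by
    rw [← Units.val_mul, ← Units.val_mul, ← _root_.map_mul, ← _root_.map_mul, hcommG]
  -- anticommutation tools
  have sw : ∀ (i j : Fin 7), i ≠ j → ∀ c : Cl 7, e i * (e j * c) = -(e j * (e i * c)) := by
    intro i j h c
    rw [← mul_assoc, anti_aux h, neg_mul, mul_assoc]
  have sq5 : ∀ c : Cl 7, e 5 * (e 5 * c) = c := by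
    intro c
    rw [← mul_assoc]
    show CliffordAlgebra.ι (Qstd 7) (Pi.single 5 1) * CliffordAlgebra.ι (Qstd 7) (Pi.single 5 1) * c = c
    rw [CliffordAlgebra.ι_sq_scalar, Qstd_single_aux, _root_.map_one, one_mul]
  have sq5' : e 5 * e 5 = 1 := by
    show CliffordAlgebra.ι (Qstd 7) (Pi.single 5 1) * CliffordAlgebra.ι (Qstd 7) (Pi.single 5 1) = 1
    rw [CliffordAlgebra.ι_sq_scalar, Qstd_single_aux, _root_.map_one]
  have key : (e 2 * e 3 * e 4 * e 5) * (e 5 * e 6)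
      = -((e 5 * e 6) * (e 2 * e 3 * e 4 * e 5)) := by
    simp only [mul_assoc]
    rw [sq5]
    rw [sw 5 6 (by decide), sw 5 2 (by decide), sw 5 3 (by decide), sw 5 4 (by decide), sq5']
    simp only [mul_one, mul_neg, neg_neg]
    rw [sw 6 2 (by decide), sw 6 3 (by decide),
      show e 6 * e 4 = -(e 4 * e 6) from anti_aux (by decide)]
    simp only [mul_neg, neg_neg, neg_mul]
  -- rewrite the commutation in terms of the basis products
  rcases h1 with h1 | h1 <;> rcases h2 with h2 | h2 <;>
  · simp only [h1, h2, neg_mul, mul_neg, neg_inj, neg_neg] at hcc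
    have hba : (e 5 * e 6) * (e 2 * e 3 * e 4 * e 5) = 0 := by
      have h2x : (e 5 * e 6) * (e 2 * e 3 * e 4 * e 5)
          = -((e 5 * e 6) * (e 2 * e 3 * e 4 * e 5)) := by
        conv_lhs => rw [← hcc]
        exact key
      have h0 : (e 5 * e 6) * (e 2 * e 3 * e 4 * e 5)
          + (e 5 * e 6) * (e 2 * e 3 * e 4 * e 5) = 0 :=
        add_eq_zero_iff_eq_neg.mpr h2x
      have h2' : (2 : ℝ) • ((e 5 * e 6) * (e 2 * e 3 * e 4 * e 5)) = 0 := by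
        rw [two_smul]; exact h0
      exact (smul_eq_zero.mp h2').resolve_left (by norm_num)
    refine Units.ne_zero (ε ⟨sgen A 1, sgen_mem A 1⟩ * ε ⟨sgen A 0, sgen_mem A 0⟩) ?_
    rw [Units.val_mul]
    simp only [h1, h2, neg_mul, mul_neg, neg_neg]
    simp only [show ((CliffordAlgebra.ι (Qstd 7) (Pi.single 5 1) *
        CliffordAlgebra.ι (Qstd 7) (Pi.single 6 1)) *
        (CliffordAlgebra.ι (Qstd 7) (Pi.single 2 1) *
        CliffordAlgebra.ι (Qstd 7) (Pi.single 3 1) *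
        CliffordAlgebra.ι (Qstd 7) (Pi.single 4 1) *
        CliffordAlgebra.ι (Qstd 7) (Pi.single 5 1)) : Cl 7) = 0 from hba, neg_zero]
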